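/- arXiv:1506.04208 — 3 statements merged into one kernel-verified Lean document; each statement's English description precedes it below -/
import Mathlib

section
/- Let A be a bounded positive operator on a separable real Hilbert space H = H1 ⊕ H2, fix an ordered orthonormal basis of H2, and set Aⁿ := Pⁿ A Pⁿ. Let Tⁿ be a short of Aⁿ to H1 for each n and let T be a short of A to H1. Then Tⁿ converges to T in the weak operator topology: ⟨Tⁿ x, y⟩ → ⟨T x, y⟩ as n → ∞, for all x, y ∈ H. -/
open MeasureTheory ProbabilityTheory Filter Topology
open scoped RealInnerProductSpace

set_option linter.unusedSectionVars false
set_option maxHeartbeats 1000000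
set_option synthInstance.maxHeartbeats 400000
noncomputable section

variable {H : Type*} [NormedAddCommGroup H] [InnerProductSpace ℝ H] [CompleteSpace H]

/-- The orthogonal projection onto a closed subspace, viewed as a map `H → H`. -/
def projL (S : Submodule ℝ H) [CompleteSpace S] : H →L[ℝ] H :=
  S.subtypeL.comp S.orthogonalProjectionOnto

/-- For an orthonormal family `e`, the orthogonal projection onto the span of
`e 0, …, e (n-1)`, viewed as a map `H → H`. -/
def projFin (e : ℕ → H) (n : ℕ) : H →L[ℝ] H :=
  ∑ i ∈ Finset.range n, (innerSL ℝ (e i)).smulRight (e i)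

/-- The orthogonal projection `Pⁿ = P_{H1} + P_{H2ⁿ}` onto `H1 ⊕ H2ⁿ`. -/
def Pn (H1 : Submodule ℝ H) [CompleteSpace H1] (e : ℕ → H) (n : ℕ) : H →L[ℝ] H :=
  projL H1 + projFin e n

/-- `T` is a short of the bounded positive operator `A` to the closed subspace `S`. -/
def IsShort (A T : H →L[ℝ] H) (S : Submodule ℝ H) : Prop :=
  T.IsPositive ∧ (A - T).IsPositive ∧ (∀ x, T x ∈ S) ∧
    ∀ X : H →L[ℝ] H, X.IsPositive → (A - X).IsPositive → (∀ x, X x ∈ S) →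
      (T - X).IsPositive

section Aux

variable (H1 : Submodule ℝ H) [CompleteSpace H1] (e : ℕ → H)

lemma isPositive_inner_nonneg {S : H →L[ℝ] H} (hS : S.IsPositive) (z : H) :
    0 ≤ ⟪S z, z⟫ := hS.2 z

lemma isPositive_of_inner {S : H →L[ℝ] H} (hsa : IsSelfAdjoint S)
    (h : ∀ z, 0 ≤ ⟪S z, z⟫) : S.IsPositive := (ContinuousLinearMap.isPositive_iff' S).mpr ⟨hsa, h⟩

lemma inner_symm2 {S : H →L[ℝ] H} (hsa : IsSelfAdjoint S) (u v : H) :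
    ⟪S u, v⟫ = ⟪u, S v⟫ := by
  have := hsa.isSymmetric u v
  simpa using this

lemma inner_symm_of_selfAdjoint {S : H →L[ℝ] H} (hsa : IsSelfAdjoint S) (u v : H) :
    ⟪S u, v⟫ = ⟪S v, u⟫ := by
  have := hsa.isSymmetric u v
  simp only [ContinuousLinearMap.coe_coe] at this
  rw [this, real_inner_comm]

lemma projFin_apply (n : ℕ) (x : H) :
    projFin e n x = ∑ i ∈ Finset.range n, ⟪e i, x⟫ • e i := by
  simp [projFin, ContinuousLinearMap.sum_apply]

lemma Pn_apply (n : ℕ) (x : H) :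
    Pn H1 e n x = (Submodule.orthogonalProjectionOnto H1 x : H) + ∑ i ∈ Finset.range n, ⟪e i, x⟫ • e i := by
  simp [Pn, projL, projFin_apply]

variable (hemem : ∀ k, e k ∈ H1ᗮ)
include hemem

lemma Pn_fix (n : ℕ) {z : H} (hz : z ∈ H1) : Pn H1 e n z = z := by
  rw [Pn_apply]
  have h1 : (Submodule.orthogonalProjectionOnto H1 z : H) = z := by
    exact Submodule.starProjection_eq_self_iff.mpr hz
  have h2 : ∀ i ∈ Finset.range n, ⟪e i, z⟫ • e i = (0 : H) := by
    intro i _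
    rw [Submodule.inner_left_of_mem_orthogonal hz (hemem i), zero_smul]
  rw [h1, Finset.sum_eq_zero h2, add_zero]

lemma Pn_e (he : Orthonormal ℝ e) (n i : ℕ) :
    Pn H1 e n (e i) = if i < n then e i else 0 := by
  rw [Pn_apply]
  have h1 : (Submodule.orthogonalProjectionOnto H1 (e i) : H) = 0 := by
    rw [Submodule.orthogonalProjectionOnto_apply_of_mem_orthogonal (hemem i),
      Submodule.coe_zero]
  have h2 : ∑ j ∈ Finset.range n, ⟪e j, e i⟫ • e j
      = if i < n then e i else 0 := by
    simp [orthonormal_iff_ite.mp he, ite_smul, Finset.mem_range]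
  rw [h1, h2, zero_add]


lemma Pn_selfAdjoint (n : ℕ) : IsSelfAdjoint (Pn H1 e n) := by
  have h1 : IsSelfAdjoint (projL H1 : H →L[ℝ] H) := isSelfAdjoint_starProjection H1
  have h2 : IsSelfAdjoint (projFin e n : H →L[ℝ] H) := by
    apply LinearMap.IsSymmetric.isSelfAdjoint
    intro u v
    simp only [ContinuousLinearMap.coe_coe, projFin_apply, inner_sum, sum_inner,
      real_inner_smul_left, real_inner_smul_right]
    congr 1
    ext i
    rw [real_inner_comm (e i) u]
    ring
  exact h1.add h2

lemma Pn_mul_le (n m : ℕ) (he : Orthonormal ℝ e) (h : n ≤ m) :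
    Pn H1 e m * Pn H1 e n = Pn H1 e n := by
  ext x
  rw [ContinuousLinearMap.mul_apply, Pn_apply H1 e n x, map_add, map_sum,
    Pn_fix H1 e hemem m (Submodule.orthogonalProjectionOnto H1 x).2]
  congr 1
  refine Finset.sum_congr rfl (fun i hi => ?_)
  rw [_root_.map_smul, Pn_e H1 e hemem he m i, if_pos (lt_of_lt_of_le (Finset.mem_range.mp hi) h)]

lemma Pn_mul_ge (n m : ℕ) (he : Orthonormal ℝ e) (h : n ≤ m) :
    Pn H1 e n * Pn H1 e m = Pn H1 e n := by
  have h1 := Pn_mul_le H1 e hemem n m he h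
  have h2 := congrArg ContinuousLinearMap.adjoint h1
  rwa [ContinuousLinearMap.mul_def, ContinuousLinearMap.adjoint_comp,
    (Pn_selfAdjoint H1 e hemem n).adjoint_eq, (Pn_selfAdjoint H1 e hemem m).adjoint_eq] at h2

lemma Pn_conj_fix (n : ℕ) (X : H →L[ℝ] H) (hsa : IsSelfAdjoint X)
    (hrange : ∀ z, X z ∈ H1) : Pn H1 e n * X * Pn H1 e n = X := by
  have hXP : ∀ z, X (Pn H1 e n z) = X z := by
    intro z
    apply ext_inner_right (𝕜 := ℝ)
    intro v
    rw [inner_symm2 hsa (Pn H1 e n z) v, inner_symm2 (Pn_selfAdjoint H1 e hemem n) z (X v),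
      Pn_fix H1 e hemem n (hrange v), ← inner_symm2 hsa z v]
  ext z
  rw [ContinuousLinearMap.mul_apply, ContinuousLinearMap.mul_apply, hXP,
    Pn_fix H1 e hemem n (hrange z)]

lemma Pn_conj_pos (n : ℕ) {C : H →L[ℝ] H} (hC : C.IsPositive) :
    (Pn H1 e n * C * Pn H1 e n).IsPositive := by
  have := hC.conj_adjoint (Pn H1 e n)
  rwa [(Pn_selfAdjoint H1 e hemem n).adjoint_eq] at this


lemma Pn_tendsto (he : Orthonormal ℝ e)
    (hspan : (Submodule.span ℝ (Set.range e)).topologicalClosure = H1ᗮ) (x : H) :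
    Filter.Tendsto (fun n => Pn H1 e n x) Filter.atTop (nhds x) := by
  set K := H1ᗮ
  set f : ℕ → K := Set.codRestrict e K hemem with hf
  have hforth : Orthonormal ℝ f := he.codRestrict K hemem
  have hfsp : ⊤ ≤ (Submodule.span ℝ (Set.range f)).topologicalClosure := by
    intro u _
    have hmem : (u : H) ∈ closure ((Submodule.span ℝ (Set.range e) : Submodule ℝ H) : Set H) := by
      rw [← Submodule.topologicalClosure_coe, hspan]
      exact u.2
    have himg : (((↑) : K → H) '' ((Submodule.span ℝ (Set.range f) : Submodule ℝ K) : Set K))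
        = ((Submodule.span ℝ (Set.range e) : Submodule ℝ H) : Set H) := by
      have : Submodule.map K.subtype (Submodule.span ℝ (Set.range f))
          = Submodule.span ℝ (Set.range e) := by
        rw [Submodule.map_span]
        congr 1
        ext z
        constructor
        · rintro ⟨w, ⟨i, rfl⟩, rfl⟩; exact ⟨i, rfl⟩
        · rintro ⟨i, rfl⟩; exact ⟨f i, ⟨i, rfl⟩, rfl⟩
      rw [← this]
      rfl
    have : u ∈ closure ((Submodule.span ℝ (Set.range f) : Submodule ℝ K) : Set K) := by
      rw [closure_subtype, himg]
      exact hmem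
    rwa [← Submodule.topologicalClosure_coe] at this
  set b : HilbertBasis ℕ ℝ K := HilbertBasis.mk hforth hfsp with hb
  have hbi : ∀ i, (b i : H) = e i := by
    intro i
    rw [hb, HilbertBasis.coe_mk]
    rfl
  have hsum := b.hasSum_orthogonalProjection x
  have hsum2 : HasSum (fun i => ⟪e i, x⟫ • e i) ((Submodule.orthogonalProjectionOnto K x : H)) := by
    have := hsum.mapL K.subtypeL
    convert this using 2 with i
    rw [_root_.map_smul]
    simp [hbi]
    rfl
  have htend := hsum2.tendsto_sum_nat
  have hxdecomp : (Submodule.orthogonalProjectionOnto H1 x : H) + (Submodule.orthogonalProjectionOnto K x : H) = x := by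
    have := congrFun (congrArg (fun (S : H →L[ℝ] H) => (S : H → H))
      (Submodule.id_eq_sum_starProjection_self_orthogonalComplement (K := H1))) x
    simp only [ContinuousLinearMap.id_apply, ContinuousLinearMap.add_apply, Submodule.starProjection,
      ContinuousLinearMap.coe_comp', Function.comp_apply] at this
    exact this.symm
  have : Filter.Tendsto (fun n => (Submodule.orthogonalProjectionOnto H1 x : H)
      + ∑ i ∈ Finset.range n, ⟪e i, x⟫ • e i) Filter.atTop
      (nhds ((Submodule.orthogonalProjectionOnto H1 x : H) + (Submodule.orthogonalProjectionOnto K x : H))) :=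
    tendsto_const_nhds.add htend
  rw [hxdecomp] at this
  convert this using 2 with n
  rw [Pn_apply]

end Aux

/-- The shorts to `H1` of the truncations `Aⁿ = Pⁿ A Pⁿ` of a bounded
positive operator `A` converge to the short of `A` to `H1` in the weak operator
topology. -/
theorem short_truncation_tendsto_weakOperatorTopology
    [SecondCountableTopology H]
    (H1 : Submodule ℝ H) [CompleteSpace H1]
    (A : H →L[ℝ] H) (hA : A.IsPositive)
    (e : ℕ → H) (he : Orthonormal ℝ e) (hemem : ∀ k, e k ∈ H1ᗮ)
    (hspan : (Submodule.span ℝ (Set.range e)).topologicalClosure = H1ᗮ)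
    (Tn : ℕ → H →L[ℝ] H)
    (hTn : ∀ n, IsShort (Pn H1 e n * A * Pn H1 e n) (Tn n) H1)
    (T : H →L[ℝ] H) (hT : IsShort A T H1) :
    ∀ x y : H, Tendsto (fun n => ⟪Tn n x, y⟫) atTop (𝓝 ⟪T x, y⟫) := by
  classical
  have hPsa : ∀ n, IsSelfAdjoint (Pn H1 e n) := Pn_selfAdjoint H1 e hemem
  -- T is dominated by each Tn n
  have hTle : ∀ n, (Tn n - T).IsPositive := by
    intro n
    refine (hTn n).2.2.2 T hT.1 ?_ hT.2.2.1
    have hfix := Pn_conj_fix H1 e hemem n T hT.1.isSelfAdjoint hT.2.2.1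
    have hpos := Pn_conj_pos H1 e hemem n hT.2.1
    have heq : Pn H1 e n * (A - T) * Pn H1 e n = Pn H1 e n * A * Pn H1 e n - T := by
      rw [mul_sub, sub_mul, hfix]
    rwa [heq] at hpos
  -- the sequence (Tn n) is antitone
  have hmono : ∀ n m, n ≤ m → (Tn n - Tn m).IsPositive := by
    intro n m h
    refine (hTn n).2.2.2 (Tn m) (hTn m).1 ?_ (hTn m).2.2.1
    have hfix := Pn_conj_fix H1 e hemem n (Tn m) (hTn m).1.isSelfAdjoint (hTn m).2.2.1
    have hpos := Pn_conj_pos H1 e hemem n (hTn m).2.1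
    have heq : Pn H1 e n * (Pn H1 e m * A * Pn H1 e m - Tn m) * Pn H1 e n
        = Pn H1 e n * A * Pn H1 e n - Tn m := by
      rw [mul_sub, sub_mul, hfix]
      congr 1
      simp only [mul_assoc]
      rw [Pn_mul_le H1 e hemem n m he h, ← mul_assoc (Pn H1 e n) (Pn H1 e m),
        Pn_mul_ge H1 e hemem n m he h]
    rwa [heq] at hpos
  set q : ℕ → H → ℝ := fun n z => ⟪Tn n z, z⟫ with hq
  have hq_anti : ∀ z : H, Antitone fun n => q n z := by
    intro z n m h
    have h0 := isPositive_inner_nonneg (hmono n m h) z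
    simp only [ContinuousLinearMap.sub_apply, inner_sub_left] at h0
    simp only [hq]
    linarith
  have hq_lb : ∀ n (z : H), ⟪T z, z⟫ ≤ q n z := by
    intro n z
    have h0 := isPositive_inner_nonneg (hTle n) z
    simp only [ContinuousLinearMap.sub_apply, inner_sub_left] at h0
    simp only [hq]
    linarith
  have hq_nonneg : ∀ n (z : H), 0 ≤ q n z := fun n z => isPositive_inner_nonneg (hTn n).1 z
  set L : H → ℝ := fun z => ⨅ n, q n z with hL
  have hqL : ∀ z, Tendsto (fun n => q n z) atTop (𝓝 (L z)) := by
    intro z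
    refine tendsto_atTop_ciInf (hq_anti z) ⟨⟪T z, z⟫, ?_⟩
    rintro r ⟨n, rfl⟩
    exact hq_lb n z
  set B : H → H → ℝ := fun u v => (L (u + v) - L u - L v) / 2 with hB
  have hkey : ∀ n (u v : H), ⟪Tn n u, v⟫ = (q n (u + v) - q n u - q n v) / 2 := by
    intro n u v
    have hsym := inner_symm_of_selfAdjoint (hTn n).1.isSelfAdjoint v u
    simp only [hq, map_add, inner_add_left, inner_add_right]
    linarith
  have hBt : ∀ u v : H, Tendsto (fun n => ⟪Tn n u, v⟫) atTop (𝓝 (B u v)) := by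
    intro u v
    have h0 := (((hqL (u + v)).sub (hqL u)).sub (hqL v)).div_const 2
    have hfun : (fun n => ⟪Tn n u, v⟫) = fun n => (q n (u + v) - q n u - q n v) / 2 :=
      funext fun n => hkey n u v
    rw [hfun, hB]
    exact h0
  set C : ℝ := ‖Tn 0‖ with hC
  have hCnn : 0 ≤ C := norm_nonneg _
  have hqC : ∀ n (z : H), q n z ≤ C * ‖z‖ ^ 2 := by
    intro n z
    have h1 : q n z ≤ q 0 z := hq_anti z (Nat.zero_le n)
    have h2 : q 0 z ≤ ‖Tn 0 z‖ * ‖z‖ := real_inner_le_norm _ _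
    have h3 : ‖Tn 0 z‖ ≤ C * ‖z‖ := (Tn 0).le_opNorm z
    nlinarith [norm_nonneg z, norm_nonneg (Tn 0 z)]
  have hCS : ∀ n (u v : H), |⟪Tn n u, v⟫| ≤ C * ‖u‖ * ‖v‖ := by
    intro n u v
    have hquad : ∀ t : ℝ, 0 ≤ q n v * (t * t) + (2 * ⟪Tn n u, v⟫) * t + q n u := by
      intro t
      have h0 := hq_nonneg n (u + t • v)
      have hsym := inner_symm_of_selfAdjoint (hTn n).1.isSelfAdjoint v u
      simp only [hq, map_add, _root_.map_smul, inner_add_left, inner_add_right,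
        real_inner_smul_left, real_inner_smul_right] at h0 ⊢
      rw [hsym] at h0
      ring_nf at h0 ⊢
      linarith
    have hd := discrim_le_zero hquad
    rw [discrim] at hd
    have h1 : ⟪Tn n u, v⟫ ^ 2 ≤ (C * ‖u‖ * ‖v‖) ^ 2 := by
      have hu := hqC n u
      have hv := hqC n v
      have hu0 := hq_nonneg n u
      have hv0 := hq_nonneg n v
      nlinarith [sq_nonneg ‖u‖, sq_nonneg ‖v‖, norm_nonneg u, norm_nonneg v,
        mul_le_mul hu hv hv0 (by positivity : (0:ℝ) ≤ C * ‖u‖ ^ 2)]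
    have h2 : (0:ℝ) ≤ C * ‖u‖ * ‖v‖ := by positivity
    rw [abs_le]
    constructor <;> nlinarith [h1, h2]
  have hBbound : ∀ u v : H, |B u v| ≤ C * ‖u‖ * ‖v‖ := fun u v =>
    le_of_tendsto (hBt u v).abs (Filter.Eventually.of_forall fun n => hCS n u v)
  have hBaddr : ∀ u v w : H, B u (v + w) = B u v + B u w := by
    intro u v w
    refine tendsto_nhds_unique (hBt u (v + w)) ?_
    have h0 := (hBt u v).add (hBt u w)
    simpa [inner_add_right] using h0
  have hBsmulr : ∀ (c : ℝ) (u v : H), B u (c • v) = c * B u v := by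
    intro c u v
    refine tendsto_nhds_unique (hBt u (c • v)) ?_
    have h0 := (hBt u v).const_mul c
    simpa [real_inner_smul_right] using h0
  have hBaddl : ∀ u v w : H, B (u + v) w = B u w + B v w := by
    intro u v w
    refine tendsto_nhds_unique (hBt (u + v) w) ?_
    have h0 := (hBt u w).add (hBt v w)
    simpa [inner_add_left] using h0
  have hBsmull : ∀ (c : ℝ) (u v : H), B (c • u) v = c * B u v := by
    intro c u v
    refine tendsto_nhds_unique (hBt (c • u) v) ?_
    have h0 := (hBt u v).const_mul c
    simpa [real_inner_smul_left] using h0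
  have hBsymm : ∀ u v : H, B u v = B v u := by
    intro u v
    refine tendsto_nhds_unique (hBt u v) ?_
    have hfun : (fun n => ⟪Tn n u, v⟫) = fun n => ⟪Tn n v, u⟫ :=
      funext fun n => (inner_symm_of_selfAdjoint (hTn n).1.isSelfAdjoint u v)
    rw [hfun]
    exact hBt v u
  -- construct the limit operator Ti
  set φ : H → H →L[ℝ] ℝ := fun u => LinearMap.mkContinuous
    { toFun := fun v => B u v
      map_add' := hBaddr u
      map_smul' := fun c v => by simpa using hBsmulr c u v }
    (C * ‖u‖) (fun v => by
      rw [Real.norm_eq_abs]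
      calc |B u v| ≤ C * ‖u‖ * ‖v‖ := hBbound u v
        _ = C * ‖u‖ * ‖v‖ := rfl) with hφ
  set g : H → H := fun u => (InnerProductSpace.toDual ℝ H).symm (φ u) with hg
  have hginner : ∀ u v : H, ⟪g u, v⟫ = B u v := by
    intro u v
    rw [hg]
    exact InnerProductSpace.toDual_symm_apply
  have hgadd : ∀ u v : H, g (u + v) = g u + g v := by
    intro u v
    apply ext_inner_right (𝕜 := ℝ)
    intro w
    rw [hginner, inner_add_left, hginner, hginner, hBaddl]
  have hgsmul : ∀ (c : ℝ) (u : H), g (c • u) = c • g u := by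
    intro c u
    apply ext_inner_right (𝕜 := ℝ)
    intro w
    rw [hginner, real_inner_smul_left, hginner, hBsmull]
  have hgnorm : ∀ u, ‖g u‖ ≤ C * ‖u‖ := by
    intro u
    rw [hg]
    simp only []
    rw [LinearIsometryEquiv.norm_map]
    exact LinearMap.mkContinuous_norm_le _ (by positivity) _
  set Ti : H →L[ℝ] H := LinearMap.mkContinuous
    { toFun := g
      map_add' := hgadd
      map_smul' := fun c u => by simpa using hgsmul c u } C
    (fun u => hgnorm u) with hTi
  have hTiinner : ∀ u v : H, ⟪Ti u, v⟫ = B u v := fun u v => hginner u v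
  have hTit : ∀ u v : H, Tendsto (fun n => ⟪Tn n u, v⟫) atTop (𝓝 ⟪Ti u, v⟫) := by
    intro u v
    rw [hTiinner]
    exact hBt u v
  have hTisa : IsSelfAdjoint Ti := by
    apply LinearMap.IsSymmetric.isSelfAdjoint
    intro u v
    simp only [ContinuousLinearMap.coe_coe]
    rw [hTiinner, hBsymm, ← hTiinner, real_inner_comm]
  have hTipos : Ti.IsPositive := by
    refine isPositive_of_inner hTisa fun z => ?_
    exact ge_of_tendsto (hTit z z) (Filter.Eventually.of_forall fun n => hq_nonneg n z)
  have hAle : (A - Ti).IsPositive := by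
    refine isPositive_of_inner (hA.isSelfAdjoint.sub hTisa) fun z => ?_
    have h1 : ∀ n, q n z ≤ ⟪A (Pn H1 e n z), Pn H1 e n z⟫ := by
      intro n
      have h0 := isPositive_inner_nonneg ((hTn n).2.1) z
      simp only [ContinuousLinearMap.sub_apply, inner_sub_left,
        ContinuousLinearMap.mul_apply] at h0
      have h2 : ⟪Pn H1 e n (A (Pn H1 e n z)), z⟫ = ⟪A (Pn H1 e n z), Pn H1 e n z⟫ := by
        rw [inner_symm2 (hPsa n) (A (Pn H1 e n z)) z]
      simp only [hq]
      linarith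
    have h2 : Tendsto (fun n => ⟪A (Pn H1 e n z), Pn H1 e n z⟫) atTop (𝓝 ⟪A z, z⟫) := by
      have hp := Pn_tendsto H1 e hemem he hspan z
      exact ((A.continuous.tendsto z).comp hp).inner hp
    have h3 : ⟪Ti z, z⟫ ≤ ⟪A z, z⟫ := le_of_tendsto_of_tendsto' (hTit z z) h2 h1
    simp only [ContinuousLinearMap.sub_apply, inner_sub_left]
    linarith
  have hTirange : ∀ z, Ti z ∈ H1 := by
    intro z
    rw [← Submodule.orthogonal_orthogonal H1, Submodule.mem_orthogonal]
    intro u hu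
    have h0 : (fun n => ⟪Tn n z, u⟫) = fun _ => (0:ℝ) :=
      funext fun n => Submodule.inner_right_of_mem_orthogonal ((hTn n).2.2.1 z) hu
    have h1 : ⟪Ti z, u⟫ = 0 := by
      refine tendsto_nhds_unique (hTit z u) ?_
      rw [h0]
      exact tendsto_const_nhds
    rw [real_inner_comm]
    exact h1
  have hfin1 : (T - Ti).IsPositive := hT.2.2.2 Ti hTipos hAle hTirange
  have hdiag : ∀ z : H, ⟪T z, z⟫ = ⟪Ti z, z⟫ := by
    intro z
    have hle : ⟪T z, z⟫ ≤ ⟪Ti z, z⟫ :=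
      ge_of_tendsto (hTit z z) (Filter.Eventually.of_forall fun n => hq_lb n z)
    have hge : ⟪Ti z, z⟫ ≤ ⟪T z, z⟫ := by
      have h0 := isPositive_inner_nonneg hfin1 z
      simp only [ContinuousLinearMap.sub_apply, inner_sub_left] at h0
      linarith
    linarith
  have hfull : ∀ u v : H, ⟪T u, v⟫ = ⟪Ti u, v⟫ := by
    intro u v
    have h1 := hdiag (u + v)
    have hsT := inner_symm_of_selfAdjoint hT.1.isSelfAdjoint v u
    have hsTi := inner_symm_of_selfAdjoint hTisa v u
    simp only [map_add, inner_add_left, inner_add_right] at h1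
    linarith [hdiag u, hdiag v]
  intro x y
  rw [hfull x y]
  exact hTit x y

end
end

section
/- Let C be a bounded positive operator on an orthogonal direct sum H = H1 ⊕ H2 of Hilbert spaces and let Q be a C-symmetric oblique projection onto H2; set E := I − Q. Then E* C E = C E, and (P1 + Q)* (E* C E + P2 C P2) (P1 + Q) = C. -/
open scoped RealInnerProductSpace

noncomputable section

variable {H : Type*} [NormedAddCommGroup H] [InnerProductSpace ℝ H] [CompleteSpace H]

/-- If `C` is a bounded positive operator on `H = H1 ⊕ H2`
(here `H2 = H1ᗮ`) and `Q` is a `C`-symmetric oblique projection onto `H2`, then with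
`E := I − Q` we have `E* C E = C E` and `(P1 + Q)* (E* C E + P2 C P2) (P1 + Q) = C`. -/
theorem oblique_projection_factorization
    (H1 : Submodule ℝ H) [CompleteSpace H1]
    (C : H →L[ℝ] H) (hC : C.IsPositive)
    (Q : H →L[ℝ] H)
    (hQidem : Q * Q = Q) (hQrange : Set.range Q = (H1ᗮ : Set H))
    (hQsymm : C * Q = ContinuousLinearMap.adjoint Q * C) :
    ContinuousLinearMap.adjoint (1 - Q) * C * (1 - Q) = C * (1 - Q) ∧
    ContinuousLinearMap.adjoint (projL H1 + Q) *
        (ContinuousLinearMap.adjoint (1 - Q) * C * (1 - Q) + projL H1ᗮ * C * projL H1ᗮ) *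
        (projL H1 + Q)
      = C := by
  set P1 := projL H1 with hP1def
  set P2 := projL H1ᗮ with hP2def
  have hadjmul : ∀ A B : H →L[ℝ] H, ContinuousLinearMap.adjoint (A * B) =
      ContinuousLinearMap.adjoint B * ContinuousLinearMap.adjoint A := fun A B => by
    rw [← ContinuousLinearMap.star_eq_adjoint, ← ContinuousLinearMap.star_eq_adjoint,
      ← ContinuousLinearMap.star_eq_adjoint, star_mul]
  have hadjone : ContinuousLinearMap.adjoint (1 : H →L[ℝ] H) = 1 := by
    rw [← ContinuousLinearMap.star_eq_adjoint, star_one]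
  -- Q fixes every element of H1ᗮ
  have hQfix : ∀ x ∈ H1ᗮ, Q x = x := by
    intro x hx
    obtain ⟨y, rfl⟩ : x ∈ Set.range Q := by rw [hQrange]; exact hx
    have := congrArg (fun T : H →L[ℝ] H => T y) hQidem
    simpa using this
  have hQmem : ∀ x : H, Q x ∈ H1ᗮ := by
    intro x
    have : Q x ∈ Set.range Q := ⟨x, rfl⟩
    rwa [hQrange] at this
  -- P2 ∘ Q = Q
  have hP2Q : P2 * Q = Q := by
    ext x
    simp only [ContinuousLinearMap.mul_apply, hP2def, projL,
      ContinuousLinearMap.comp_apply, Submodule.subtypeL_apply]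
    exact Submodule.starProjection_eq_self_iff.mpr (hQmem x)
  -- Q ∘ P2 = P2
  have hQP2 : Q * P2 = P2 := by
    ext x
    simp only [ContinuousLinearMap.mul_apply]
    exact hQfix _ (by simp [hP2def, projL])
  -- P1 + P2 = 1
  have hsum : P1 + P2 = 1 := by
    ext x
    simp only [ContinuousLinearMap.add_apply, ContinuousLinearMap.one_apply, hP1def,
      hP2def, projL, ContinuousLinearMap.comp_apply, Submodule.subtypeL_apply]
    exact Submodule.starProjection_add_starProjection_orthogonal (K := H1) x
  have hP1sa : ContinuousLinearMap.adjoint P1 = P1 :=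
    (isSelfAdjoint_starProjection H1).adjoint_eq
  have hP2sa : ContinuousLinearMap.adjoint P2 = P2 :=
    (isSelfAdjoint_starProjection H1ᗮ).adjoint_eq
  have hadjE : ContinuousLinearMap.adjoint (1 - Q) = 1 - ContinuousLinearMap.adjoint Q := by
    rw [map_sub, hadjone]
  -- key: Q* C (1 - Q) = 0
  have key : ContinuousLinearMap.adjoint Q * C * (1 - Q) = 0 := by
    rw [← hQsymm, mul_sub, mul_one, mul_assoc, hQidem, sub_self]
  have first : ContinuousLinearMap.adjoint (1 - Q) * C * (1 - Q) = C * (1 - Q) := by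
    rw [hadjE, sub_mul, one_mul, sub_mul, key, sub_zero]
  refine ⟨first, ?_⟩
  -- E (P1 + Q) = E
  have hEQ : (1 - Q) * Q = 0 := by rw [sub_mul, one_mul, hQidem, sub_self]
  have hEP2 : (1 - Q) * P2 = 0 := by rw [sub_mul, one_mul, hQP2, sub_self]
  have hEP1 : (1 - Q) * P1 = 1 - Q := by
    have h := congrArg (fun T => (1 - Q) * T) hsum
    simpa [mul_add, hEP2] using h
  have hE_PQ : (1 - Q) * (P1 + Q) = 1 - Q := by rw [mul_add, hEP1, hEQ, add_zero]
  -- P2 (P1 + Q) = Q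
  have hP2P1 : P2 * P1 = 0 := by
    have h1 : P1 = 1 - P2 := eq_sub_of_add_eq hsum
    have hP2idem : P2 * P2 = P2 := by
      ext x
      simp only [ContinuousLinearMap.mul_apply, hP2def, projL,
        ContinuousLinearMap.comp_apply, Submodule.subtypeL_apply]
      exact Submodule.starProjection_eq_self_iff.mpr (by simp)
    rw [h1, mul_sub, mul_one, hP2idem, sub_self]
  have hP2_PQ : P2 * (P1 + Q) = Q := by rw [mul_add, hP2P1, hP2Q, zero_add]
  -- rearrangement lemma
  have rearr : ∀ T : H →L[ℝ] H,
      ContinuousLinearMap.adjoint (P1 + Q) * (ContinuousLinearMap.adjoint T * C * T) *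
          (P1 + Q)
        = ContinuousLinearMap.adjoint (T * (P1 + Q)) * C * (T * (P1 + Q)) := by
    intro T
    simp only [hadjmul, mul_assoc]
  have hY : P2 * C * P2 = ContinuousLinearMap.adjoint P2 * C * P2 := by rw [hP2sa]
  have expand : ∀ X Y : H →L[ℝ] H,
      ContinuousLinearMap.adjoint (P1 + Q) * (X + Y) * (P1 + Q)
        = ContinuousLinearMap.adjoint (P1 + Q) * X * (P1 + Q) +
          ContinuousLinearMap.adjoint (P1 + Q) * Y * (P1 + Q) := fun X Y => by
    rw [mul_add (ContinuousLinearMap.adjoint (P1 + Q)) X Y, add_mul]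
  rw [hY, expand, rearr (1 - Q), rearr P2, hE_PQ, hP2_PQ, first, ← hQsymm,
    mul_assoc C Q Q, hQidem, ← mul_add, sub_add_cancel, mul_one]

end
end

section
/- Let H2 be a closed subspace of a real Hilbert space H, let P1 be the orthogonal projection of H onto H2^⊥, and let Q be a bounded idempotent operator on H (Q² = Q) with range Q = H2. Then P1 + Q is invertible in the algebra of bounded operators, with inverse 2 − P1 − Q; that is, (2 − P1 − Q)(P1 + Q) = I = (P1 + Q)(2 − P1 − Q). -/
open scoped RealInnerProductSpace

noncomputable section

variable {H : Type*} [NormedAddCommGroup H] [InnerProductSpace ℝ H] [CompleteSpace H]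

/-- If `H2` is a closed subspace of a real Hilbert space `H`, `P1` is the
orthogonal projection onto `H2ᗮ`, and `Q` is a bounded idempotent with range `H2`, then
`P1 + Q` is invertible with inverse `2 − P1 − Q`. -/
theorem proj_add_oblique_invertible
    (H2 : Submodule ℝ H) [CompleteSpace H2]
    (Q : H →L[ℝ] H)
    (hQidem : Q * Q = Q) (hQrange : Set.range Q = (H2 : Set H)) :
    (2 - projL H2ᗮ - Q) * (projL H2ᗮ + Q) = 1 ∧
    (projL H2ᗮ + Q) * (2 - projL H2ᗮ - Q) = 1 := by
  set P := projL H2ᗮ with hP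
  -- Q fixes elements of H2
  have hQfix : ∀ y ∈ H2, Q y = y := by
    intro y hy
    have hy' : y ∈ Set.range Q := by rw [hQrange]; exact hy
    obtain ⟨z, rfl⟩ := hy'
    have := congrArg (fun f : H →L[ℝ] H => f z) hQidem
    simpa using this
  -- P is idempotent
  have hP2 : ∀ x, P (P x) = P x := by
    intro x
    simp only [hP, projL, ContinuousLinearMap.comp_apply, Submodule.subtypeL_apply]
    rw [Submodule.orthogonalProjectionOnto_mem_subspace_eq_self]
  -- P kills H2 (in particular range Q)
  have hPQ : ∀ x, P (Q x) = 0 := by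
    intro x
    have hmem : Q x ∈ H2ᗮᗮ := (Submodule.le_orthogonal_orthogonal H2)
      (by have : Q x ∈ Set.range Q := ⟨x, rfl⟩; rwa [hQrange] at this)
    simp only [hP, projL, ContinuousLinearMap.comp_apply, Submodule.subtypeL_apply]
    rw [Submodule.orthogonalProjectionOnto_apply_of_mem_orthogonal hmem]
    simp
  -- Q P x = P x + Q x - x
  have hQP : ∀ x, Q (P x) = P x + Q x - x := by
    intro x
    have hmem : x - P x ∈ H2 := by
      have : x - P x ∈ H2ᗮᗮ := Submodule.sub_starProjection_mem_orthogonal (K := H2ᗮ) x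
      rwa [Submodule.orthogonal_orthogonal] at this
    have := hQfix _ hmem
    rw [map_sub] at this
    have hq : Q x - Q (P x) = x - P x := this
    have : Q (P x) = Q x - (x - P x) := by
      rw [← hq]; abel
    rw [this]; abel
  have h2 : (2 : H →L[ℝ] H) = 1 + 1 := by norm_num
  rw [h2]
  constructor
  · ext x
    simp only [ContinuousLinearMap.mul_apply, ContinuousLinearMap.sub_apply,
      ContinuousLinearMap.add_apply, ContinuousLinearMap.one_apply, map_add,
      ContinuousLinearMap.one_apply]
    rw [hP2, hPQ, hQP]
    have hQQ : Q (Q x) = Q x := by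
      have := congrArg (fun f : H →L[ℝ] H => f x) hQidem
      simpa using this
    rw [hQQ]
    abel
  · ext x
    simp only [ContinuousLinearMap.mul_apply, ContinuousLinearMap.sub_apply,
      ContinuousLinearMap.add_apply, ContinuousLinearMap.one_apply, map_sub, map_add,
      ContinuousLinearMap.one_apply]
    have hQQ : ∀ y, Q (Q y) = Q y := by
      intro y
      have := congrArg (fun f : H →L[ℝ] H => f y) hQidem
      simpa using this
    rw [hP2, hPQ, hQP, hQQ]
    abel
end
end
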